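/- Rademacher contraction: Let σ_1,...,σ_n be i.i.d. Rademacher variables (±1 with probability 1/2), let Z_1,...,Z_n be fixed points in a set Z, let H be a set of functions h : Z → ℝ, and let φ : ℝ → ℝ be L-Lipschitz. Then E_σ [ sup_{h∈H} (1/n) Σ_i σ_i φ(h(Z_i)) ] ≤ L · E_σ [ sup_{h∈H} (1/n) Σ_i σ_i h(Z_i) ]. -/

import Mathlib

open Finset

/-- The real sign `±1` associated with a Boolean. -/
def radSign (b : Bool) : ℝ := if b then 1 else -1

lemma radSign_true : radSign true = 1 := rfl
lemma radSign_false : radSign false = -1 := rfl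

lemma radSign_not (b : Bool) : radSign (!b) = - radSign b := by cases b <;> simp [radSign]

/-- One-dimensional contraction principle. -/
lemma key_contraction {ι : Type*} [Nonempty ι] (A u : ι → ℝ) (ψ : ℝ → ℝ) (K : ℝ)
    (hψ : ∀ a b, |ψ a - ψ b| ≤ K * |a - b|)
    (h1 : BddAbove (Set.range fun i => A i + K * u i))
    (h2 : BddAbove (Set.range fun i => A i - K * u i)) :
    ((⨆ i, (A i + ψ (u i))) + ⨆ i, (A i - ψ (u i))) ≤
      (⨆ i, (A i + K * u i)) + ⨆ i, (A i - K * u i) := by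
  set S1 := ⨆ i, (A i + K * u i) with hS1
  set S2 := ⨆ i, (A i - K * u i) with hS2
  have key : ∀ i j, (A i + ψ (u i)) + (A j - ψ (u j)) ≤ S1 + S2 := by
    intro i j
    have hab := hψ (u i) (u j)
    have h3 := le_abs_self (ψ (u i) - ψ (u j))
    rcases le_total (u j) (u i) with hc | hc
    · have habs : |u i - u j| = u i - u j := abs_of_nonneg (by linarith)
      have e1 : A i + K * u i ≤ S1 := le_ciSup h1 i
      have e2 : A j - K * u j ≤ S2 := le_ciSup h2 j
      rw [habs] at hab
      nlinarith
    · have habs : |u i - u j| = u j - u i := by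
        rw [abs_sub_comm]; exact abs_of_nonneg (by linarith)
      have e1 : A j + K * u j ≤ S1 := le_ciSup h1 j
      have e2 : A i - K * u i ≤ S2 := le_ciSup h2 i
      rw [habs] at hab
      nlinarith
  have H1 : ∀ i, (A i + ψ (u i)) + (⨆ j, (A j - ψ (u j))) ≤ S1 + S2 := by
    intro i
    have : (⨆ j, (A j - ψ (u j))) ≤ S1 + S2 - (A i + ψ (u i)) :=
      ciSup_le fun j => by linarith [key i j]
    linarith
  have H2 : (⨆ i, (A i + ψ (u i))) ≤ S1 + S2 - ⨆ j, (A j - ψ (u j)) :=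
    ciSup_le fun i => by linarith [H1 i]
  linarith

/-- `mix φ L s i` is `L * ·` on coordinates in `s` and `φ` elsewhere. -/
def mix (φ : ℝ → ℝ) (L : ℝ) {n : ℕ} (s : Finset (Fin n)) (i : Fin n) (x : ℝ) : ℝ :=
  if i ∈ s then L * x else φ x

lemma bdd_mix {Z : Type*} {n : ℕ} {Zp : Fin n → Z} {H : Set (Z → ℝ)}
    {φ : ℝ → ℝ} {L : ℝ} (hL : 0 ≤ L)
    (hb1 : ∀ σ : Fin n → Bool, BddAbove (Set.range fun h : H =>
        (1 / n : ℝ) * ∑ i, radSign (σ i) * φ ((h : Z → ℝ) (Zp i))))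
    (hb2 : ∀ σ : Fin n → Bool, BddAbove (Set.range fun h : H =>
        (1 / n : ℝ) * ∑ i, radSign (σ i) * (h : Z → ℝ) (Zp i)))
    (σ : Fin n → Bool) (s : Finset (Fin n)) :
    BddAbove (Set.range fun h : H =>
      (1 / n : ℝ) * ∑ i, radSign (σ i) * mix φ L s i ((h : Z → ℝ) (Zp i))) := by
  classical
  set c : ℝ := (1 / n : ℝ) with hc
  have hc0 : 0 ≤ c := by positivity
  set σp : Fin n → Bool := fun i => if i ∈ s then σ i else true with hσp
  set σm : Fin n → Bool := fun i => if i ∈ s then σ i else false with hσm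
  set τp : Fin n → Bool := fun i => if i ∈ s then true else σ i with hτp
  set τm : Fin n → Bool := fun i => if i ∈ s then false else σ i with hτm
  obtain ⟨M1, hM1⟩ := hb2 σp
  obtain ⟨M2, hM2⟩ := hb2 σm
  obtain ⟨M3, hM3⟩ := hb1 τp
  obtain ⟨M4, hM4⟩ := hb1 τm
  refine ⟨L * ((M1 + M2) / 2) + (M3 + M4) / 2, ?_⟩
  rintro x ⟨h, rfl⟩
  dsimp only
  have b1 : c * ∑ i, radSign (σp i) * (h : Z → ℝ) (Zp i) ≤ M1 :=
    hM1 (Set.mem_range_self h)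
  have b2 : c * ∑ i, radSign (σm i) * (h : Z → ℝ) (Zp i) ≤ M2 :=
    hM2 (Set.mem_range_self h)
  have b3 : c * ∑ i, radSign (τp i) * φ ((h : Z → ℝ) (Zp i)) ≤ M3 :=
    hM3 (Set.mem_range_self h)
  have b4 : c * ∑ i, radSign (τm i) * φ ((h : Z → ℝ) (Zp i)) ≤ M4 :=
    hM4 (Set.mem_range_self h)
  have hsum : c * ∑ i, radSign (σ i) * mix φ L s i ((h : Z → ℝ) (Zp i))
      = L * ((c * ∑ i, radSign (σp i) * (h : Z → ℝ) (Zp i)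
              + c * ∑ i, radSign (σm i) * (h : Z → ℝ) (Zp i)) / 2)
        + (c * ∑ i, radSign (τp i) * φ ((h : Z → ℝ) (Zp i))
              + c * ∑ i, radSign (τm i) * φ ((h : Z → ℝ) (Zp i))) / 2 := by
    have : ∑ i, radSign (σ i) * mix φ L s i ((h : Z → ℝ) (Zp i))
        = ∑ i, (L * ((radSign (σp i) * (h : Z → ℝ) (Zp i)
                + radSign (σm i) * (h : Z → ℝ) (Zp i)) / 2)
            + (radSign (τp i) * φ ((h : Z → ℝ) (Zp i))
                + radSign (τm i) * φ ((h : Z → ℝ) (Zp i))) / 2) := by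
      refine Finset.sum_congr rfl fun i _ => ?_
      by_cases hi : i ∈ s <;> simp [mix, hσp, hσm, hτp, hτm, hi, radSign] <;> ring
    have e2 : ∀ f : Fin n → ℝ, c * ∑ i, f i = ∑ i, c * f i := fun f => Finset.mul_sum _ _ _
    rw [this, e2, e2, e2, e2, e2, ← Finset.sum_add_distrib, ← Finset.sum_add_distrib,
      Finset.sum_div, Finset.sum_div, Finset.mul_sum, ← Finset.sum_add_distrib]
    exact Finset.sum_congr rfl fun i _ => by ring
  rw [hsum]
  gcongr

/-- A sign-sum against `mix` splits off the `k`-th coordinate, with the rest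
rewritten along an agreement hypothesis. -/
lemma decomp {Z : Type*} {n : ℕ} (Zp : Fin n → Z) (φ : ℝ → ℝ) (L : ℝ) (k : Fin n)
    (s t : Finset (Fin n)) (σ τ : Fin n → Bool)
    (hagree : ∀ i, i ≠ k → ∀ x : ℝ, radSign (τ i) * mix φ L t i x = radSign (σ i) * mix φ L s i x)
    (h : Z → ℝ) :
    (1 / n : ℝ) * ∑ i, radSign (τ i) * mix φ L t i (h (Zp i))
      = ((1 / n : ℝ) * ∑ i ∈ Finset.univ.erase k, radSign (σ i) * mix φ L s i (h (Zp i)))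
        + radSign (τ k) * ((1 / n : ℝ) * mix φ L t k (h (Zp k))) := by
  classical
  rw [← Finset.add_sum_erase _ (fun i => radSign (τ i) * mix φ L t i (h (Zp i)))
      (Finset.mem_univ k)]
  have : ∑ i ∈ Finset.univ.erase k, radSign (τ i) * mix φ L t i (h (Zp i))
      = ∑ i ∈ Finset.univ.erase k, radSign (σ i) * mix φ L s i (h (Zp i)) :=
    Finset.sum_congr rfl fun i hi => hagree i (Finset.ne_of_mem_erase hi) _
  rw [this]
  ring

lemma step_lemma {Z : Type*} {n : ℕ} {Zp : Fin n → Z} {H : Set (Z → ℝ)} (hne : H.Nonempty)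
    {φ : ℝ → ℝ} {L : ℝ} (hL : 0 ≤ L) (hφ : ∀ a b : ℝ, |φ a - φ b| ≤ L * |a - b|)
    (hb1 : ∀ σ : Fin n → Bool, BddAbove (Set.range fun h : H =>
        (1 / n : ℝ) * ∑ i, radSign (σ i) * φ ((h : Z → ℝ) (Zp i))))
    (hb2 : ∀ σ : Fin n → Bool, BddAbove (Set.range fun h : H =>
        (1 / n : ℝ) * ∑ i, radSign (σ i) * (h : Z → ℝ) (Zp i)))
    (k : Fin n) (s : Finset (Fin n)) (hk : k ∉ s) :
    ∑ σ : Fin n → Bool,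
        ⨆ h : H, (1 / n : ℝ) * ∑ i, radSign (σ i) * mix φ L s i ((h : Z → ℝ) (Zp i))
      ≤ ∑ σ : Fin n → Bool,
        ⨆ h : H, (1 / n : ℝ) * ∑ i, radSign (σ i) * mix φ L (insert k s) i ((h : Z → ℝ) (Zp i)) := by
  classical
  haveI : Nonempty H := hne.to_subtype
  set c : ℝ := (1 / n : ℝ) with hc
  have hc0 : 0 ≤ c := by positivity
  set F : (Fin n → Bool) → ℝ := fun σ =>
    ⨆ h : H, c * ∑ i, radSign (σ i) * mix φ L s i ((h : Z → ℝ) (Zp i)) with hF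
  set G : (Fin n → Bool) → ℝ := fun σ =>
    ⨆ h : H, c * ∑ i, radSign (σ i) * mix φ L (insert k s) i ((h : Z → ℝ) (Zp i)) with hG
  have hinv : Function.Involutive (fun σ : Fin n → Bool => Function.update σ k (!σ k)) := by
    intro σ; funext i
    by_cases hik : i = k
    · subst hik; simp
    · simp [Function.update_of_ne hik]
  set e := hinv.toPerm with he
  have hmemk : k ∈ insert k s := Finset.mem_insert_self k s
  -- pointwise pairing inequality
  have pointwise : ∀ σ : Fin n → Bool, F σ + F (e σ) ≤ G σ + G (e σ) := by
    intro σ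
    set A : H → ℝ := fun h =>
      c * ∑ i ∈ Finset.univ.erase k, radSign (σ i) * mix φ L s i ((h : Z → ℝ) (Zp i)) with hA
    set u : H → ℝ := fun h => (h : Z → ℝ) (Zp k) with hu
    set ψ : ℝ → ℝ := fun x => radSign (σ k) * (c * φ x) with hψdef
    have hεabs : |radSign (σ k)| = 1 := by cases hσk : σ k <;> simp [radSign]
    have hψ : ∀ a b : ℝ, |ψ a - ψ b| ≤ (c * L) * |a - b| := by
      intro a b
      have h1 : ψ a - ψ b = radSign (σ k) * (c * (φ a - φ b)) := by rw [hψdef]; ring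
      rw [h1, abs_mul, hεabs, one_mul, abs_mul, abs_of_nonneg hc0]
      calc c * |φ a - φ b| ≤ c * (L * |a - b|) :=
            mul_le_mul_of_nonneg_left (hφ a b) hc0
        _ = (c * L) * |a - b| := by ring
    have heσ : ∀ i, i ≠ k → e σ i = σ i := fun i hik => Function.update_of_ne hik _ _
    have heσk : e σ k = !σ k := Function.update_self _ _ _
    -- the four iSup identities
    have eq1 : F σ = ⨆ h : H, (A h + ψ (u h)) := by
      rw [hF]
      refine iSup_congr fun h => ?_
      rw [decomp Zp φ L k s s σ σ (fun _ _ _ => rfl) _]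
      simp only [hA, hu, hψdef, mix, if_neg hk, hc]
    have eq2 : F (e σ) = ⨆ h : H, (A h - ψ (u h)) := by
      rw [hF]
      refine iSup_congr fun h => ?_
      rw [decomp Zp φ L k s s σ (e σ)
        (fun i hik x => by rw [heσ i hik]) _]
      simp only [hA, hu, hψdef, mix, if_neg hk, heσk, radSign_not]
      ring
    have hagm : ∀ i, i ≠ k → ∀ x : ℝ,
        radSign (σ i) * mix φ L (insert k s) i x = radSign (σ i) * mix φ L s i x := by
      intro i hik x
      simp [mix, Finset.mem_insert, hik]
    have eq3 : G σ = ⨆ h : H, (A h + radSign (σ k) * ((c * L) * u h)) := by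
      rw [hG]
      refine iSup_congr fun h => ?_
      rw [decomp Zp φ L k s (insert k s) σ σ hagm _]
      simp only [hA, hu, mix, if_pos hmemk]
      ring
    have eq4 : G (e σ) = ⨆ h : H, (A h - radSign (σ k) * ((c * L) * u h)) := by
      rw [hG]
      refine iSup_congr fun h => ?_
      rw [decomp Zp φ L k s (insert k s) σ (e σ)
        (fun i hik x => by rw [heσ i hik]; exact hagm i hik x) _]
      simp only [hA, hu, mix, if_pos hmemk, heσk, radSign_not]
      ring
    -- boundedness
    have bddP : BddAbove (Set.range fun h : H => A h + (c * L) * u h) := by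
      have hb := bdd_mix hL hb1 hb2 (Function.update σ k true) (insert k s)
      have hfun : (fun h : H => c * ∑ i, radSign (Function.update σ k true i)
          * mix φ L (insert k s) i ((h : Z → ℝ) (Zp i)))
          = fun h : H => A h + (c * L) * u h := by
        funext h
        rw [decomp Zp φ L k s (insert k s) σ (Function.update σ k true)
          (fun i hik x => by rw [Function.update_of_ne hik]; exact hagm i hik x) _]
        simp only [hA, hu, mix, if_pos hmemk, Function.update_self, radSign_true]
        ring
      rwa [hfun] at hb
    have bddM : BddAbove (Set.range fun h : H => A h - (c * L) * u h) := by
      have hb := bdd_mix hL hb1 hb2 (Function.update σ k false) (insert k s)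
      have hfun : (fun h : H => c * ∑ i, radSign (Function.update σ k false i)
          * mix φ L (insert k s) i ((h : Z → ℝ) (Zp i)))
          = fun h : H => A h - (c * L) * u h := by
        funext h
        rw [decomp Zp φ L k s (insert k s) σ (Function.update σ k false)
          (fun i hik x => by rw [Function.update_of_ne hik]; exact hagm i hik x) _]
        simp only [hA, hu, mix, if_pos hmemk, Function.update_self, radSign_false]
        ring
      rwa [hfun] at hb
    have main := key_contraction A u ψ (c * L) hψ bddP bddM
    rw [eq1, eq2, eq3, eq4]
    rcases Bool.dichotomy (σ k) with hσk | hσk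
    · have h1 : radSign (σ k) = -1 := by rw [hσk]; rfl
      simp only [h1]
      have e3 : (⨆ h : H, (A h + -1 * ((c * L) * u h))) = ⨆ h : H, (A h - (c * L) * u h) := by
        refine iSup_congr fun h => by ring
      have e4 : (⨆ h : H, (A h - -1 * ((c * L) * u h))) = ⨆ h : H, (A h + (c * L) * u h) := by
        refine iSup_congr fun h => by ring
      rw [e3, e4]
      linarith [main]
    · have h1 : radSign (σ k) = 1 := by rw [hσk]; rfl
      simp only [h1]
      have e3 : (⨆ h : H, (A h + 1 * ((c * L) * u h))) = ⨆ h : H, (A h + (c * L) * u h) := by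
        refine iSup_congr fun h => by ring
      have e4 : (⨆ h : H, (A h - 1 * ((c * L) * u h))) = ⨆ h : H, (A h - (c * L) * u h) := by
        refine iSup_congr fun h => by ring
      rw [e3, e4]
      exact main
  -- sum over the pairing
  have hsum : ∑ σ : Fin n → Bool, (F σ + F (e σ)) ≤ ∑ σ : Fin n → Bool, (G σ + G (e σ)) :=
    Finset.sum_le_sum fun σ _ => pointwise σ
  have hF2 : ∑ σ : Fin n → Bool, F (e σ) = ∑ σ : Fin n → Bool, F σ := Equiv.sum_comp e F
  have hG2 : ∑ σ : Fin n → Bool, G (e σ) = ∑ σ : Fin n → Bool, G σ := Equiv.sum_comp e G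
  rw [Finset.sum_add_distrib, Finset.sum_add_distrib, hF2, hG2] at hsum
  linarith

/-- Rademacher contraction: composing a function class with an `L`-Lipschitz `φ`
multiplies the empirical Rademacher complexity by at most `L`. -/
theorem stmt10 {Z : Type*} (n : ℕ) (Zp : Fin n → Z) (H : Set (Z → ℝ)) (hne : H.Nonempty)
    (φ : ℝ → ℝ) (L : ℝ) (hL : 0 ≤ L) (hφ : ∀ a b : ℝ, |φ a - φ b| ≤ L * |a - b|)
    (hb1 : ∀ σ : Fin n → Bool, BddAbove (Set.range fun h : H =>
        (1 / n : ℝ) * ∑ i, radSign (σ i) * φ ((h : Z → ℝ) (Zp i))))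
    (hb2 : ∀ σ : Fin n → Bool, BddAbove (Set.range fun h : H =>
        (1 / n : ℝ) * ∑ i, radSign (σ i) * (h : Z → ℝ) (Zp i))) :
    (1 / 2 ^ n : ℝ) * ∑ σ : Fin n → Bool,
        ⨆ h : H, (1 / n : ℝ) * ∑ i, radSign (σ i) * φ ((h : Z → ℝ) (Zp i))
      ≤ L * ((1 / 2 ^ n : ℝ) * ∑ σ : Fin n → Bool,
        ⨆ h : H, (1 / n : ℝ) * ∑ i, radSign (σ i) * (h : Z → ℝ) (Zp i)) := by
  classical
  haveI : Nonempty H := hne.to_subtype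
  have hind : ∀ s : Finset (Fin n),
      ∑ σ : Fin n → Bool,
          ⨆ h : H, (1 / n : ℝ) * ∑ i, radSign (σ i) * mix φ L ∅ i ((h : Z → ℝ) (Zp i))
        ≤ ∑ σ : Fin n → Bool,
          ⨆ h : H, (1 / n : ℝ) * ∑ i, radSign (σ i) * mix φ L s i ((h : Z → ℝ) (Zp i)) := by
    intro s
    induction s using Finset.induction_on with
    | empty => exact le_refl _
    | @insert a t ha ih => exact le_trans ih (step_lemma hne hL hφ hb1 hb2 a t ha)
  have eL : ∀ σ : Fin n → Bool,
      (⨆ h : H, (1 / n : ℝ) * ∑ i, radSign (σ i) * φ ((h : Z → ℝ) (Zp i)))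
        = ⨆ h : H, (1 / n : ℝ) * ∑ i, radSign (σ i) * mix φ L ∅ i ((h : Z → ℝ) (Zp i)) :=
    fun σ => iSup_congr fun h => by simp [mix]
  have eR : ∀ σ : Fin n → Bool,
      (⨆ h : H, (1 / n : ℝ) * ∑ i, radSign (σ i) * mix φ L Finset.univ i ((h : Z → ℝ) (Zp i)))
        = L * ⨆ h : H, (1 / n : ℝ) * ∑ i, radSign (σ i) * (h : Z → ℝ) (Zp i) := by
    intro σ
    rw [Real.mul_iSup_of_nonneg hL]
    refine iSup_congr fun h => ?_
    have : ∑ i, radSign (σ i) * mix φ L Finset.univ i ((h : Z → ℝ) (Zp i))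
        = L * ∑ i, radSign (σ i) * (h : Z → ℝ) (Zp i) := by
      rw [Finset.mul_sum]
      exact Finset.sum_congr rfl fun i _ => by
        simp only [mix, Finset.mem_univ, if_true]; ring
    rw [this]; ring
  calc (1 / 2 ^ n : ℝ) * ∑ σ : Fin n → Bool,
        ⨆ h : H, (1 / n : ℝ) * ∑ i, radSign (σ i) * φ ((h : Z → ℝ) (Zp i))
      = (1 / 2 ^ n : ℝ) * ∑ σ : Fin n → Bool,
          ⨆ h : H, (1 / n : ℝ) * ∑ i, radSign (σ i) * mix φ L ∅ i ((h : Z → ℝ) (Zp i)) := by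
        rw [Finset.sum_congr rfl fun σ _ => eL σ]
    _ ≤ (1 / 2 ^ n : ℝ) * ∑ σ : Fin n → Bool,
          ⨆ h : H, (1 / n : ℝ) * ∑ i, radSign (σ i) * mix φ L Finset.univ i ((h : Z → ℝ) (Zp i)) :=
        mul_le_mul_of_nonneg_left (hind Finset.univ) (by positivity)
    _ = (1 / 2 ^ n : ℝ) * ∑ σ : Fin n → Bool,
          L * ⨆ h : H, (1 / n : ℝ) * ∑ i, radSign (σ i) * (h : Z → ℝ) (Zp i) := by
        rw [Finset.sum_congr rfl fun σ _ => eR σ]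
    _ = L * ((1 / 2 ^ n : ℝ) * ∑ σ : Fin n → Bool,
          ⨆ h : H, (1 / n : ℝ) * ∑ i, radSign (σ i) * (h : Z → ℝ) (Zp i)) := by
        rw [← Finset.mul_sum]; ring
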